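/- arXiv:1611.00562 — 8 statements merged into one kernel-verified Lean document; each statement's English description precedes it below -/
import Mathlib

section
/- For any set S, the collection Ω(S) of all downward-closed families of finite subsets of S, ordered by reverse inclusion and with addition given by intersection, is a value quantale; moreover an element p ∈ Ω(S) is well above the bottom element (p ≻ ⊥) if and only if p is a finite family. -/
/-- `y` is well above `x` (written `y ≻ x`): for every `S` with `⨅ S ≤ x`
there is `s ∈ S` with `s ≤ y`. -/
def WellAbove {V : Type*} [CompleteLattice V] (y x : V) : Prop :=
  ∀ S : Set V, sInf S ≤ x → ∃ s ∈ S, s ≤ y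

theorem WellAbove.mono {V : Type*} [CompleteLattice V] {a b x : V}
    (h : WellAbove a x) (hab : a ≤ b) : WellAbove b x := by
  intro S hS
  obtain ⟨s, hs, hsa⟩ := h S hS
  exact ⟨s, hs, hsa.trans hab⟩

/-- A complete lattice `V` together with an addition `add` is a value quantale if it is
completely distributive (expressed via Raney's characterization `y = ⨅ {a | a ≻ y}`),
the set `{a | a ≻ ⊥}` is a filter (nonempty, upward closed, closed under binary meets),
and `add` is associative, commutative, has `⊥` as neutral element and distributes over
arbitrary infima. -/
structure IsValueQuantale (V : Type*) [CompleteLattice V] (add : V → V → V) : Prop where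
  raney : ∀ y : V, y = sInf {a | WellAbove a y}
  wellAbove_bot_nonempty : ∃ a : V, WellAbove a ⊥
  wellAbove_bot_upward : ∀ a b : V, WellAbove a ⊥ → a ≤ b → WellAbove b ⊥
  wellAbove_bot_inf : ∀ a b : V, WellAbove a ⊥ → WellAbove b ⊥ → WellAbove (a ⊓ b) ⊥
  add_assoc : ∀ a b c : V, add (add a b) c = add a (add b c)
  add_comm : ∀ a b : V, add a b = add b a
  add_bot : ∀ a : V, add a ⊥ = a
  add_sInf : ∀ (a : V) (S : Set V), add a (sInf S) = ⨅ s ∈ S, add a s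

/-- A value quantale, bundled as a class. -/
class ValueQuantale (V : Type*) extends CompleteLattice V, Add V where
  isVQ : IsValueQuantale V (· + ·)

/-- `d : X → X → V` is a `V`-space distance (w.r.t. the addition `add`). -/
structure IsVSpaceOn {V : Type*} [CompleteLattice V] (add : V → V → V)
    {X : Type*} (d : X → X → V) : Prop where
  refl : ∀ x, d x x = ⊥
  triangle : ∀ x y z, d x z ≤ add (d x y) (d y z)

/-- The open ball of radius `ε` about `x`: all `y` with `d x y ≺ ε`. -/
def ball {V X : Type*} [CompleteLattice V] (d : X → X → V) (ε : V) (x : X) : Set X :=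
  {y | WellAbove ε (d x y)}

/-- `U` is open for the topology generated by a continuity space. -/
def GenOpen {V X : Type*} [CompleteLattice V] (d : X → X → V) (U : Set X) : Prop :=
  ∀ x ∈ U, ∃ ε : V, WellAbove ε ⊥ ∧ ball d ε x ⊆ U

/-- The topology generated by a continuity space `(V, X, d)`. -/
def genTop {V X : Type*} [ValueQuantale V] (d : X → X → V) : TopologicalSpace X where
  IsOpen := GenOpen d
  isOpen_univ := fun _x _ => by
    obtain ⟨ε, hε⟩ := (ValueQuantale.isVQ (V := V)).wellAbove_bot_nonempty
    exact ⟨ε, hε, Set.subset_univ _⟩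
  isOpen_inter := fun U₁ U₂ h₁ h₂ x hx => by
    obtain ⟨ε₁, hε₁, hb₁⟩ := h₁ x hx.1
    obtain ⟨ε₂, hε₂, hb₂⟩ := h₂ x hx.2
    exact ⟨ε₁ ⊓ ε₂, (ValueQuantale.isVQ (V := V)).wellAbove_bot_inf _ _ hε₁ hε₂,
      fun y hy => ⟨hb₁ (WellAbove.mono hy inf_le_left), hb₂ (WellAbove.mono hy inf_le_right)⟩⟩
  isOpen_sUnion := fun S hS x hx => by
    obtain ⟨U, hU, hxU⟩ := hx
    obtain ⟨ε, hε, hb⟩ := hS U hU x hxU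
    exact ⟨ε, hε, hb.trans (Set.subset_sUnion_of_mem hU)⟩

/-- `Ω S`: the downward-closed families of finite subsets of `S`,
ordered by reverse inclusion. -/
abbrev Omega (S : Type*) := (LowerSet (Finset S))ᵒᵈ

/-- The underlying family of finite subsets of an element of `Ω S`. -/
def Omega.carrier {S : Type*} (A : Omega S) : Set (Finset S) :=
  ((OrderDual.ofDual A : LowerSet (Finset S)) : Set (Finset S))

/-- Construct an element of `Ω S` from a downward-closed family of finite subsets. -/
def Omega.mk {S : Type*} (A : Set (Finset S)) (h : IsLowerSet A) : Omega S :=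
  OrderDual.toDual ⟨A, h⟩

/-- Addition on `Ω S`: intersection of the families. -/
def omegaAdd {S : Type*} (A B : Omega S) : Omega S :=
  Omega.mk (Omega.carrier A ∩ Omega.carrier B)
    ((OrderDual.ofDual A : LowerSet (Finset S)).lower.inter
      (OrderDual.ofDual B : LowerSet (Finset S)).lower)

namespace Omega
variable {S : Type*}

theorem le_iff' {A B : Omega S} : A ≤ B ↔ carrier B ⊆ carrier A := Iff.rfl

theorem ext' {A B : Omega S} (h : carrier A = carrier B) : A = B :=
  OrderDual.ofDual.injective (SetLike.coe_injective h)

theorem lower (A : Omega S) : IsLowerSet (carrier A) :=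
  (OrderDual.ofDual A : LowerSet (Finset S)).lower

theorem mem_carrier_sInf {T : Set (Omega S)} {F : Finset S} :
    F ∈ carrier (sInf T) ↔ ∃ A ∈ T, F ∈ carrier A := by
  show F ∈ ((OrderDual.ofDual (sInf T) : LowerSet (Finset S)) : Set (Finset S)) ↔ _
  rw [ofDual_sInf, LowerSet.coe_sSup]
  simp only [Set.mem_iUnion, Set.mem_preimage, SetLike.mem_coe]
  constructor
  · rintro ⟨s, hs, hF⟩; exact ⟨OrderDual.toDual s, hs, hF⟩
  · rintro ⟨A, hA, hF⟩; exact ⟨OrderDual.ofDual A, hA, hF⟩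

theorem carrier_bot : carrier (⊥ : Omega S) = Set.univ := rfl

theorem carrier_Iic (F : Finset S) :
    carrier (OrderDual.toDual (LowerSet.Iic F) : Omega S) = Set.Iic F := rfl
end Omega

namespace Omega
variable {S : Type*}

theorem wellAbove_Iic {y : Omega S} {F : Finset S} (hF : F ∈ carrier y) :
    WellAbove (OrderDual.toDual (LowerSet.Iic F) : Omega S) y := by
  intro T hT
  obtain ⟨A, hA, hFA⟩ := mem_carrier_sInf.mp (le_iff'.mp hT hF)
  refine ⟨A, hA, le_iff'.mpr fun G hG => ?_⟩
  rw [carrier_Iic] at hG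
  exact lower A hG hFA

theorem le_of_wellAbove {a y : Omega S} (h : WellAbove a y) : y ≤ a := by
  obtain ⟨s, hs, hsa⟩ := h {y} (le_of_eq sInf_singleton)
  rw [Set.mem_singleton_iff] at hs; exact hs ▸ hsa

theorem wellAbove_bot_iff {p : Omega S} : WellAbove p ⊥ ↔ (carrier p).Finite := by
  constructor
  · intro h
    have hside : sInf (Set.range fun F : Finset S =>
        (OrderDual.toDual (LowerSet.Iic F) : Omega S)) ≤ ⊥ := by
      refine le_iff'.mpr fun F _ => ?_
      exact mem_carrier_sInf.mpr ⟨_, ⟨F, rfl⟩, by rw [carrier_Iic]; exact Set.mem_Iic.mpr le_rfl⟩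
    obtain ⟨s, hs, hsp⟩ := h _ hside
    obtain ⟨F, rfl⟩ := hs
    refine Set.Finite.subset (Set.Finite.ofFinset F.powerset ?_) (le_iff'.mp hsp)
    intro G; rw [carrier_Iic]; simp [Finset.mem_powerset, Set.mem_Iic]
  · intro hfin T hT
    classical
    set F : Finset S := hfin.toFinset.sup id with hFdef
    have hF : F ∈ carrier (sInf T) := le_iff'.mp hT (by rw [carrier_bot]; trivial)
    obtain ⟨A, hA, hFA⟩ := mem_carrier_sInf.mp hF
    refine ⟨A, hA, le_iff'.mpr fun G hG => ?_⟩
    have : G ≤ F := Finset.le_sup (f := id) (hfin.mem_toFinset.mpr hG)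
    exact lower A this hFA

theorem raney' (y : Omega S) : y = sInf {a | WellAbove a y} := by
  refine ext' (Set.Subset.antisymm ?_ ?_)
  · intro F hF
    exact mem_carrier_sInf.mpr ⟨_, wellAbove_Iic hF, by rw [carrier_Iic]; exact Set.mem_Iic.mpr le_rfl⟩
  · intro F hF
    obtain ⟨A, hA, hFA⟩ := mem_carrier_sInf.mp hF
    exact le_iff'.mp (le_of_wellAbove hA) hFA

theorem mem_carrier_iInf {ι : Sort*} {f : ι → Omega S} {F : Finset S} :
    F ∈ carrier (⨅ i, f i) ↔ ∃ i, F ∈ carrier (f i) := by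
  rw [iInf]
  simp [mem_carrier_sInf]

theorem carrier_inf (a b : Omega S) : carrier (a ⊓ b) = carrier a ∪ carrier b := by
  show ((OrderDual.ofDual a ⊔ OrderDual.ofDual b : LowerSet (Finset S)) : Set (Finset S)) = _
  exact LowerSet.coe_sup _ _

end Omega

/-- For any set `S`, the collection `Ω S` of downward-closed families of
finite subsets of `S`, ordered by reverse inclusion with addition given by intersection,
is a value quantale, and `p ≻ ⊥` iff `p` is a finite family. -/
theorem omega_isValueQuantale (S : Type*) :
    (∀ A B : Omega S, A ≤ B ↔ Omega.carrier B ⊆ Omega.carrier A) ∧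
    (∀ A B : Omega S, Omega.carrier (omegaAdd A B) = Omega.carrier A ∩ Omega.carrier B) ∧
    IsValueQuantale (Omega S) omegaAdd ∧
    (∀ p : Omega S, WellAbove p ⊥ ↔ (Omega.carrier p).Finite) := by
    classical
  refine ⟨fun A B => Omega.le_iff', fun A B => rfl, ?_, fun p => Omega.wellAbove_bot_iff⟩
  have hadd : ∀ A B : Omega S,
      Omega.carrier (omegaAdd A B) = Omega.carrier A ∩ Omega.carrier B := fun _ _ => rfl
  refine ⟨Omega.raney', ⟨⊤, Omega.wellAbove_bot_iff.mpr ?_⟩,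
    fun a b ha hab => WellAbove.mono ha hab,
    fun a b ha hb => Omega.wellAbove_bot_iff.mpr ?_, ?_, ?_, ?_, ?_⟩
  · show (∅ : Set (Finset S)).Finite
    exact Set.finite_empty
  · rw [Omega.carrier_inf]
    exact (Omega.wellAbove_bot_iff.mp ha).union (Omega.wellAbove_bot_iff.mp hb)
  · intro a b c
    refine Omega.ext' ?_
    rw [hadd, hadd, hadd, hadd, Set.inter_assoc]
  · intro a b
    refine Omega.ext' ?_
    rw [hadd, hadd, Set.inter_comm]
  · intro a
    refine Omega.ext' ?_
    rw [hadd, Omega.carrier_bot, Set.inter_univ]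
  · intro a T
    refine Omega.ext' (Set.ext fun F => ?_)
    rw [hadd]
    simp only [Set.mem_inter_iff, Omega.mem_carrier_sInf, Omega.mem_carrier_iInf, hadd,
      Set.mem_inter_iff]
    tauto
end

section
/- Let (V,X,d) and (W,Y,m) be continuity spaces and f : X → Y a function. Then f is ε–δ continuous (for every x ∈ X and every ε ∈ W_≺ there exists δ ∈ V_≺ such that for all x' ∈ X, d(x,x') ≺ δ implies m(f(x),f(x')) ≺ ε) if and only if f is continuous with respect to the topologies generated by (V,X,d) and (W,Y,m). -/
theorem WellAbove.le {V : Type*} [CompleteLattice V] {a x : V}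
    (h : WellAbove a x) : x ≤ a := by
  obtain ⟨s, hs, hsa⟩ := h {x} (by simp)
  simpa [hs.symm ▸ hsa] using hs ▸ hsa

theorem WellAbove.mono_right {V : Type*} [CompleteLattice V] {a x y : V}
    (h : WellAbove a x) (hyx : y ≤ x) : WellAbove a y :=
  fun S hS => h S (hS.trans hyx)

/-- Interpolation for the well-above relation, from Raney's characterization. -/
theorem wellAbove_interpolate {V : Type*} [CompleteLattice V]
    (raney : ∀ y : V, y = sInf {a | WellAbove a y}) {r p : V} (h : WellAbove r p) :
    ∃ q, WellAbove r q ∧ WellAbove q p := by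
  have hT : sInf {b : V | ∃ a, WellAbove a p ∧ WellAbove b a} ≤ p := by
    have h1 : sInf {b : V | ∃ a, WellAbove a p ∧ WellAbove b a}
        ≤ sInf {a | WellAbove a p} := by
      apply le_sInf
      intro a ha
      calc sInf {b : V | ∃ a', WellAbove a' p ∧ WellAbove b a'}
          ≤ sInf {b | WellAbove b a} := sInf_le_sInf (fun b hb => ⟨a, ha, hb⟩)
        _ = a := (raney a).symm
    exact h1.trans (le_of_eq (raney p).symm)
  obtain ⟨b, ⟨a, hap, hba⟩, hbr⟩ := h _ hT
  exact ⟨a, (hba.mono hbr : WellAbove r a), hap⟩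

section VQ

variable {V : Type*} [ValueQuantale V]

theorem vq_add_mono_right {a : V} {b c : V} (h : b ≤ c) : a + b ≤ a + c := by
  have hq := (ValueQuantale.isVQ (V := V))
  have : a + sInf {b, c} = ⨅ s ∈ ({b, c} : Set V), a + s := hq.add_sInf a {b, c}
  have hbc : sInf ({b, c} : Set V) = b := by
    rw [sInf_pair, inf_eq_left]; exact h
  rw [hbc] at this
  rw [this]
  exact biInf_le _ (by simp)

/-- If `ε ≻ p` then there is `δ ≻ ⊥` with `p + δ ≤ ε`. -/
theorem exists_add_le {ε p : V} (h : WellAbove ε p) :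
    ∃ δ : V, WellAbove δ ⊥ ∧ p + δ ≤ ε := by
  have hq := (ValueQuantale.isVQ (V := V))
  have hbot : sInf {a : V | WellAbove a ⊥} = ⊥ := by
    conv_lhs => rw [← hq.raney ⊥]
  have hS : sInf ((fun δ => p + δ) '' {a : V | WellAbove a ⊥}) ≤ p := by
    have : sInf ((fun δ => p + δ) '' {a : V | WellAbove a ⊥})
        = ⨅ s ∈ {a : V | WellAbove a ⊥}, p + s := by
      rw [sInf_image]
    rw [this, ← hq.add_sInf, hbot, hq.add_bot]
  obtain ⟨s, ⟨δ, hδ, rfl⟩, hs⟩ := h _ hS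
  exact ⟨δ, hδ, hs⟩

/-- If `ε ≻ p` then there is `δ ≻ ⊥` with `ε ≻ p + δ`. -/
theorem exists_wellAbove_add {ε p : V} (h : WellAbove ε p) :
    ∃ δ : V, WellAbove δ ⊥ ∧ WellAbove ε (p + δ) := by
  have hq := (ValueQuantale.isVQ (V := V))
  obtain ⟨q, hrq, hqp⟩ := wellAbove_interpolate hq.raney h
  obtain ⟨δ, hδ, hle⟩ := exists_add_le hqp
  exact ⟨δ, hδ, hrq.mono_right hle⟩

/-- Open balls are open in the generated topology. -/
theorem genOpen_ball {X : Type*} (d : X → X → V)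
    (hd : IsVSpaceOn (· + · : V → V → V) d) (ε : V) (x : X) :
    GenOpen d (ball d ε x) := by
  intro y hy
  obtain ⟨δ, hδ, hεδ⟩ := exists_wellAbove_add (hy : WellAbove ε (d x y))
  refine ⟨δ, hδ, fun z hz => ?_⟩
  have h1 : d x z ≤ d x y + δ :=
    (hd.triangle x y z).trans (vq_add_mono_right (WellAbove.le hz))
  exact hεδ.mono_right h1

end VQ

/-- for continuity spaces `(V,X,d)` and `(W,Y,m)`, a function `f : X → Y`
is ε–δ continuous iff it is topologically continuous for the generated topologies. -/
theorem epsilonDelta_iff_continuous {V W X Y : Type*} [ValueQuantale V] [ValueQuantale W]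
    (d : X → X → V) (hd : IsVSpaceOn (· + · : V → V → V) d)
    (m : Y → Y → W) (hm : IsVSpaceOn (· + · : W → W → W) m)
    (f : X → Y) :
    (∀ x : X, ∀ ε : W, WellAbove ε ⊥ →
        ∃ δ : V, WellAbove δ ⊥ ∧
          ∀ x' : X, WellAbove δ (d x x') → WellAbove ε (m (f x) (f x'))) ↔
      @Continuous X Y (genTop d) (genTop m) f := by
  constructor
  · intro h
    rw [@continuous_def X Y (genTop d) (genTop m)]
    intro U hU x hx
    obtain ⟨ε, hε, hball⟩ := hU (f x) hx
    obtain ⟨δ, hδ, hδε⟩ := h x ε hε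
    exact ⟨δ, hδ, fun x' hx' => hball (hδε x' hx')⟩
  · intro h x ε hε
    have hUopen : GenOpen d (f ⁻¹' ball m ε (f x)) :=
      (@continuous_def X Y (genTop d) (genTop m) f).mp h _ (genOpen_ball m hm ε (f x))
    have hxmem : x ∈ f ⁻¹' ball m ε (f x) := by
      show WellAbove ε (m (f x) (f x))
      exact (hm.refl (f x)).symm ▸ hε
    obtain ⟨δ, hδ, hball⟩ := hUopen x hxmem
    exact ⟨δ, hδ, fun x' hx' => hball hx'⟩
end

section
/- Let (X,τ) be a topological space. Define d : X × X → Ω(τ) by d(x,y) = {F a finite subset of τ | for all U ∈ F, x ∈ U implies y ∈ U}. Then (X,d) is an Ω(τ)-space (each d(x,y) is downward closed, d(x,x) = ⊥, and d(x,z) ≤ d(x,y) + d(y,z)), and the topology generated by (Ω(τ),X,d) equals τ. Consequently every topological space is generated by some continuity space. -/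
open TopologicalSpace in
/-- The distance `d(x,y) = {F a finite set of open sets | ∀ U ∈ F, x ∈ U → y ∈ U}`,
valued in `Ω τ` where `τ` is the collection of open sets of `X`. -/
def topDist (X : Type*) [TopologicalSpace X] (x y : X) : Omega (Opens X) :=
  Omega.mk {F : Finset (Opens X) | ∀ U ∈ F, x ∈ U → y ∈ U}
    (by intro G F h hG U hU hx; exact hG U (h hU) hx)

section OmegaLemmas

variable {S : Type*}

lemma Omega.carrier_lower (A : Omega S) : IsLowerSet (Omega.carrier A) :=
  (OrderDual.ofDual A : LowerSet (Finset S)).lower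

lemma Omega.carrier_mk (A : Set (Finset S)) (h : IsLowerSet A) :
    Omega.carrier (Omega.mk A h) = A := rfl

lemma Omega.ext'_s3 {A B : Omega S} (h : Omega.carrier A = Omega.carrier B) : A = B := by
  have := SetLike.coe_injective (A := LowerSet (Finset S)) h
  exact congrArg OrderDual.toDual this

lemma Omega.le_iff {A B : Omega S} : A ≤ B ↔ Omega.carrier B ⊆ Omega.carrier A :=
  (LowerSet.coe_subset_coe (s := OrderDual.ofDual B) (t := OrderDual.ofDual A)).symm

lemma Omega.mem_carrier_sInf_s3 {T : Set (Omega S)} {F : Finset S} :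
    F ∈ Omega.carrier (sInf T) ↔ ∃ a ∈ T, F ∈ Omega.carrier a :=
  LowerSet.mem_sSup_iff

lemma Omega.carrier_bot_s3 : Omega.carrier (⊥ : Omega S) = Set.univ := rfl

/-- The principal element `↓F` of `Ω S`. -/
def Omega.principal (F : Finset S) : Omega S :=
  Omega.mk {G | G ⊆ F} (fun _G _H hHG hG => hHG.trans hG)

lemma Omega.wellAbove_iff {A B : Omega S} :
    WellAbove A B ↔ ∃ F ∈ Omega.carrier B, Omega.carrier A ⊆ {G | G ⊆ F} := by
  constructor
  · intro h
    obtain ⟨s, hs, hsA⟩ := h (Omega.principal '' Omega.carrier B) (by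
      rw [Omega.le_iff]
      intro F hF
      exact Omega.mem_carrier_sInf_s3.2 ⟨Omega.principal F, ⟨F, hF, rfl⟩, Finset.Subset.refl F⟩)
    obtain ⟨F, hF, rfl⟩ := hs
    exact ⟨F, hF, Omega.le_iff.1 hsA⟩
  · rintro ⟨F, hF, hAF⟩ T hT
    have := Omega.le_iff.1 hT hF
    obtain ⟨s, hs, hFs⟩ := Omega.mem_carrier_sInf_s3.1 this
    refine ⟨s, hs, Omega.le_iff.2 fun G hG => ?_⟩
    exact (Omega.carrier_lower s) (hAF hG) hFs

lemma Omega.carrier_omegaAdd (A B : Omega S) :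
    Omega.carrier (omegaAdd A B) = Omega.carrier A ∩ Omega.carrier B := rfl

lemma Omega.isValueQuantale : IsValueQuantale (Omega S) omegaAdd := by
  classical
  refine ⟨?_, ?_, ?_, ?_, ?_, ?_, ?_, ?_⟩
  · intro y
    apply Omega.ext'_s3
    ext F
    rw [Omega.mem_carrier_sInf_s3]
    constructor
    · intro hF
      exact ⟨Omega.principal F, Omega.wellAbove_iff.2 ⟨F, hF, fun G hG => hG⟩,
        Finset.Subset.refl F⟩
    · rintro ⟨a, ha, hFa⟩
      obtain ⟨G, hG, haG⟩ := Omega.wellAbove_iff.1 ha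
      exact Omega.carrier_lower y (haG hFa) hG
  · exact ⟨Omega.principal ∅, Omega.wellAbove_iff.2 ⟨∅, trivial, fun G hG => hG⟩⟩
  · exact fun a b ha hab => ha.mono hab
  · intro a b ha hb
    obtain ⟨F, _, hFa⟩ := Omega.wellAbove_iff.1 ha
    obtain ⟨G, _, hGb⟩ := Omega.wellAbove_iff.1 hb
    refine Omega.wellAbove_iff.2 ⟨F ∪ G, trivial, fun H hH => ?_⟩
    have : H ∈ Omega.carrier a ∪ Omega.carrier b := by
      have : Omega.carrier (a ⊓ b) = Omega.carrier a ∪ Omega.carrier b := rfl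
      rwa [this] at hH
    rcases this with h | h
    · exact (hFa h).trans Finset.subset_union_left
    · exact (hGb h).trans Finset.subset_union_right
  · intro a b c
    apply Omega.ext'_s3
    simp [Omega.carrier_omegaAdd, Set.inter_assoc]
  · intro a b
    apply Omega.ext'_s3
    simp [Omega.carrier_omegaAdd, Set.inter_comm]
  · intro a
    apply Omega.ext'_s3
    simp [Omega.carrier_omegaAdd, Omega.carrier_bot_s3]
  · intro a T
    apply Omega.ext'_s3
    ext F
    have : (⨅ s ∈ T, omegaAdd a s) = sInf (Set.image (omegaAdd a) T) := by
      rw [sInf_image]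
    rw [this, Omega.mem_carrier_sInf_s3, Omega.carrier_omegaAdd, Set.mem_inter_iff,
      Omega.mem_carrier_sInf_s3]
    constructor
    · rintro ⟨hFa, s, hs, hFs⟩
      exact ⟨omegaAdd a s, ⟨s, hs, rfl⟩, hFa, hFs⟩
    · rintro ⟨b, ⟨s, hs, rfl⟩, hFa, hFs⟩
      exact ⟨hFa, s, hs, hFs⟩

end OmegaLemmas
open TopologicalSpace in
lemma topDist_carrier {X : Type*} [TopologicalSpace X] (x y : X) :
    Omega.carrier (topDist X x y) = {F : Finset (Opens X) | ∀ U ∈ F, x ∈ U → y ∈ U} := rfl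

open TopologicalSpace in
lemma topDist_isVSpace (X : Type*) [TopologicalSpace X] :
    IsVSpaceOn omegaAdd (topDist X) := by
  constructor
  · intro x
    apply Omega.ext'_s3
    rw [topDist_carrier, Omega.carrier_bot_s3]
    ext F
    simp only [Set.mem_univ, iff_true, Set.mem_setOf_eq]
    exact fun U _ h => h
  · intro x y z
    rw [Omega.le_iff, Omega.carrier_omegaAdd]
    rintro F ⟨h1, h2⟩ U hU hx
    exact h2 U hU (h1 U hU hx)

open TopologicalSpace in
lemma topDist_genOpen_iff {X : Type*} [TopologicalSpace X] (U : Set X) :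
    GenOpen (topDist X) U ↔ IsOpen U := by
  constructor
  · intro h
    rw [isOpen_iff_forall_mem_open]
    intro x hx
    obtain ⟨ε, hε, hball⟩ := h x hx
    obtain ⟨F, -, hεF⟩ := Omega.wellAbove_iff.1 hε
    refine ⟨⋂ W ∈ (F : Set (Opens X)), {z | x ∈ W → z ∈ W}, fun y hy => ?_, ?_, ?_⟩
    · apply hball
      refine Omega.wellAbove_iff.2 ⟨F, ?_, hεF⟩
      intro W hW hxW
      simp only [Set.mem_iInter] at hy
      exact hy W hW hxW
    · refine Set.Finite.isOpen_biInter F.finite_toSet fun W _ => ?_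
      by_cases hxW : x ∈ W
      · have : {z : X | x ∈ W → z ∈ W} = (W : Set X) := by
          ext z; simp [hxW]
        rw [this]; exact W.isOpen
      · have : {z : X | x ∈ W → z ∈ W} = Set.univ := by
          ext z; simp [hxW]
        rw [this]; exact isOpen_univ
    · simp only [Set.mem_iInter]
      exact fun W _ hxW => hxW
  · intro hU x hx
    set V : Opens X := ⟨U, hU⟩ with hV
    have h1 : WellAbove (Omega.principal {V}) (⊥ : Omega (Opens X)) := by
      refine Omega.wellAbove_iff.2 ⟨{V}, trivial, fun G hG => hG⟩
    refine ⟨Omega.principal {V}, h1, fun y hy => ?_⟩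
    obtain ⟨F, hF, hεF⟩ := Omega.wellAbove_iff.1 hy
    have hmem : ({V} : Finset (Opens X)) ⊆ F := hεF (Finset.Subset.refl _)
    exact hF V (hmem (Finset.mem_singleton_self _)) hx

open TopologicalSpace in
/-- for a topological space `(X,τ)`, `topDist` makes `X` an `Ω(τ)`-space
whose generated topology is exactly `τ`; consequently every topological space is
generated by some continuity space. -/
theorem topDist_generates {X : Type u} [TopologicalSpace X] :
    IsVSpaceOn omegaAdd (topDist X) ∧
    (∀ U : Set X, GenOpen (topDist X) U ↔ IsOpen U) ∧
    ∃ (W : Type u) (_ : CompleteLattice W) (add : W → W → W) (δ : X → X → W),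
      IsValueQuantale W add ∧ IsVSpaceOn add δ ∧ ∀ U : Set X, GenOpen δ U ↔ IsOpen U := by
  exact ⟨topDist_isVSpace X, topDist_genOpen_iff,
    ⟨Omega (Opens X), inferInstance, omegaAdd, topDist X,
      Omega.isValueQuantale, topDist_isVSpace X, topDist_genOpen_iff⟩⟩
end

section
/- Let (V,X,d) be a continuity space and C ⊆ X. Then the closure of C in the topology generated by (V,X,d) equals {z ∈ X | d(z,C) = ⊥}; in particular, C is closed in this topology if and only if for every x ∈ X, d(x,C) = ⊥ implies x ∈ C. -/
theorem WellAbove.anti {V : Type*} [CompleteLattice V] {a x y : V}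
    (h : WellAbove a y) (hxy : x ≤ y) : WellAbove a x :=
  fun S hS => h S (hS.trans hxy)

/-- for a continuity space `(V,X,d)` and `C ⊆ X`, the closure of `C` in the
generated topology is `{z | d(z,C) = ⊥}`; in particular `C` is closed iff
`d(x,C) = ⊥ → x ∈ C` for every `x`. -/
theorem closure_eq_zero_dist {V X : Type*} [ValueQuantale V] (d : X → X → V)
    (hd : IsVSpaceOn (· + · : V → V → V) d) (C : Set X) :
    @closure X (genTop d) C = {z : X | (⨅ y ∈ C, d z y) = ⊥} ∧
    (@IsClosed X (genTop d) C ↔ ∀ x : X, (⨅ y ∈ C, d x y) = ⊥ → x ∈ C) := by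
  obtain ⟨raney, hne, hup, hinf, hassoc, hcomm, hbot, hadds⟩ := ValueQuantale.isVQ (V := V)
  letI t : TopologicalSpace X := genTop d
  -- The target set is closed: its complement is open.
  have hclosed : IsClosed {z : X | (⨅ y ∈ C, d z y) = ⊥} := by
    rw [← isOpen_compl_iff]
    intro z hz
    set m := ⨅ y ∈ C, d z y with hm
    have hex : ∃ ε : V, WellAbove ε ⊥ ∧ ¬ WellAbove ε m := by
      by_contra hall
      push_neg at hall
      apply hz
      have h1 : m ≤ ⊥ := by
        calc m = sInf {a | WellAbove a m} := raney m
          _ ≤ sInf {a | WellAbove a ⊥} := sInf_le_sInf (fun a ha => hall a ha)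
          _ = ⊥ := (raney ⊥).symm
      exact le_bot_iff.mp h1
    obtain ⟨ε, hε, hεm⟩ := hex
    refine ⟨ε, hε, ?_⟩
    intro w hw
    -- hw : WellAbove ε (d z w); show w is in the complement
    intro hwC
    apply hεm
    have key : d z w + (⨅ y ∈ C, d w y) = ⨅ y ∈ C, (d z w + d w y) := by
      have := hadds (d z w) ((fun y => d w y) '' C)
      rwa [sInf_image, iInf_image] at this
    have hmle : m ≤ d z w := by
      have h2 : m ≤ ⨅ y ∈ C, (d z w + d w y) :=
        le_iInf₂ fun y hy => (biInf_le (fun y => d z y) hy).trans (hd.triangle z w y)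
      rw [← key, Set.mem_setOf_eq.mp hwC, hbot] at h2
      exact h2
    exact hw.anti hmle
  have hCsub : C ⊆ {z : X | (⨅ y ∈ C, d z y) = ⊥} := by
    intro y hy
    exact le_bot_iff.mp ((biInf_le (fun w => d y w) hy).trans_eq (hd.refl y))
  have hsub2 : {z : X | (⨅ y ∈ C, d z y) = ⊥} ⊆ closure C := by
    intro z hz
    rw [mem_closure_iff]
    intro U hU hzU
    obtain ⟨ε, hε, hball⟩ := hU z hzU
    set S : Set V := ⋃ y ∈ C, {a | WellAbove a (d z y)} with hS
    have hSinf : sInf S ≤ ⊥ := by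
      rw [← Set.mem_setOf_eq.mp hz]
      refine le_iInf₂ fun y hy => ?_
      calc sInf S ≤ sInf {a | WellAbove a (d z y)} :=
            sInf_le_sInf (Set.subset_iUnion₂ (s := fun y _ => {a | WellAbove a (d z y)}) y hy)
        _ = d z y := (raney (d z y)).symm
    obtain ⟨a, haS, haε⟩ := hε S hSinf
    simp only [hS, Set.mem_iUnion, Set.mem_setOf_eq] at haS
    obtain ⟨y, hyC, hay⟩ := haS
    exact ⟨y, hball (hay.mono haε), hyC⟩
  have heq : closure C = {z : X | (⨅ y ∈ C, d z y) = ⊥} :=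
    le_antisymm (closure_minimal hCsub hclosed) hsub2
  refine ⟨heq, ?_, ?_⟩
  · intro hcl x hx
    rw [← hcl.closure_eq, heq]
    exact hx
  · intro h
    exact isClosed_of_closure_subset (heq ▸ fun z hz => h z hz)
end

section
/- Let (V,X,d) be a continuity space. The topology generated by (V,X,d) is Fréchet (T1) if and only if for all x, y ∈ X, d(x,y) = ⊥ implies x = y. -/
/-- the topology generated by a continuity space `(V,X,d)` is T1 iff
`d(x,y) = ⊥` implies `x = y`. -/
theorem t1_iff {V X : Type*} [ValueQuantale V] (d : X → X → V)
    (hd : IsVSpaceOn (· + · : V → V → V) d) :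
    @T1Space X (genTop d) ↔ ∀ x y : X, d x y = ⊥ → x = y := by
  letI : TopologicalSpace X := genTop d
  constructor
  · intro h x y hxy
    by_contra hne
    have hcl : IsClosed ({y} : Set X) := h.t1 y
    have hop : GenOpen d ({y}ᶜ : Set X) := hcl.isOpen_compl
    obtain ⟨ε, hε, hb⟩ := hop x hne
    exact hb (show WellAbove ε (d x y) by rw [hxy]; exact hε) rfl
  · intro h
    refine ⟨fun y => ?_⟩
    rw [← isOpen_compl_iff]
    intro x hx
    have hdxy : d x y ≠ ⊥ := fun hb => hx (h x y hb)
    have hex : ¬ ∀ ε : V, WellAbove ε ⊥ → WellAbove ε (d x y) := by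
      intro hall
      apply hdxy
      have h1 : d x y ≤ sInf {a : V | WellAbove a ⊥} := by
        apply le_sInf
        intro b hb
        obtain ⟨s, hs, hsb⟩ := hall b hb {d x y} (by simp)
        simp only [Set.mem_singleton_iff] at hs
        exact hs ▸ hsb
      rw [← (ValueQuantale.isVQ (V := V)).raney ⊥] at h1
      exact le_bot_iff.mp h1
    push_neg at hex
    obtain ⟨ε, hε, hεd⟩ := hex
    exact ⟨ε, hε, fun z hz hzy => hεd (by rwa [hzy] at hz)⟩
end

section
/- Let V be a value quantale. If ε ≻ ⊥ then there exists δ ≻ ⊥ such that ε ≻ δ + δ. -/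
/-- in a value quantale, if `ε ≻ ⊥` then there is `δ ≻ ⊥` with
`ε ≻ δ + δ`. -/
theorem exists_half {V : Type*} [ValueQuantale V] (ε : V) (h : WellAbove ε ⊥) :
    ∃ δ : V, WellAbove δ ⊥ ∧ WellAbove ε (δ + δ) := by

  classical
  set VQ := ValueQuantale.isVQ (V := V) with hVQ
  -- monotonicity of addition
  have add_mono : ∀ c a b : V, a ≤ b → c + a ≤ c + b := by
    intro c a b hab
    have h1 : c + sInf {a, b} = ⨅ s ∈ ({a, b} : Set V), c + s := VQ.add_sInf c {a, b}
    have h2 : sInf ({a, b} : Set V) = a := by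
      rw [sInf_pair]; exact inf_eq_left.mpr hab
    have h3 : (⨅ s ∈ ({a, b} : Set V), c + s) ≤ c + b := by
      exact biInf_le (fun s => c + s) (by simp : b ∈ ({a, b} : Set V))
    calc c + a = c + sInf {a, b} := by rw [h2]
      _ = ⨅ s ∈ ({a, b} : Set V), c + s := h1
      _ ≤ c + b := h3
  -- interpolation: find θ with ε ≻ θ ≻ ⊥
  obtain ⟨θ, hεθ, hθ⟩ : ∃ θ : V, WellAbove ε θ ∧ WellAbove θ ⊥ := by
    set S : Set V := {b | ∃ a : V, WellAbove a ⊥ ∧ WellAbove b a} with hS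
    have hinf : sInf S ≤ ⊥ := by
      have : sInf S ≤ sInf {a | WellAbove a ⊥} := by
        apply le_sInf
        intro a ha
        have hra : a = sInf {b | WellAbove b a} := VQ.raney a
        rw [hra]
        apply sInf_le_sInf
        intro b hb
        exact ⟨a, ha, hb⟩
      rwa [← VQ.raney ⊥] at this
    obtain ⟨b, hbS, hbε⟩ := h S hinf
    obtain ⟨a, ha, hba⟩ := hbS
    exact ⟨a, WellAbove.mono hba hbε, ha⟩
  -- find a, b ≻ ⊥ with a + b ≤ θ
  set T : Set V := {x | ∃ a b : V, WellAbove a ⊥ ∧ WellAbove b ⊥ ∧ x = a + b} with hT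
  have hinfT : sInf T ≤ ⊥ := by
    set A : Set V := {a | WellAbove a ⊥} with hA
    have hbot : (⊥ : V) = sInf A := VQ.raney ⊥
    have key : (⊥ : V) = ⨅ b ∈ A, ⨅ a ∈ A, (b + a) := by
      have h1 : (⊥ : V) = ⊥ + ⊥ := (VQ.add_bot ⊥).symm
      calc (⊥ : V) = ⊥ + sInf A := by rw [← hbot, VQ.add_bot]
        _ = ⨅ b ∈ A, (⊥ + b) := VQ.add_sInf ⊥ A
        _ = ⨅ b ∈ A, (b + ⊥) := by simp_rw [VQ.add_comm]
        _ = ⨅ b ∈ A, (b + sInf A) := by rw [← hbot]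
        _ = ⨅ b ∈ A, ⨅ a ∈ A, (b + a) := by
            apply iInf_congr; intro b; apply iInf_congr; intro hb
            exact VQ.add_sInf b A
    have : sInf T ≤ ⨅ b ∈ A, ⨅ a ∈ A, (b + a) := by
      apply le_iInf; intro b; apply le_iInf; intro hb
      apply le_iInf; intro a; apply le_iInf; intro ha
      exact sInf_le ⟨b, a, hb, ha, rfl⟩
    rwa [← key] at this
  obtain ⟨x, hxT, hxθ⟩ := hθ T hinfT
  obtain ⟨a, b, ha, hb, rfl⟩ := hxT
  refine ⟨a ⊓ b, VQ.wellAbove_bot_inf a b ha hb, ?_⟩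
  have hle : (a ⊓ b) + (a ⊓ b) ≤ a + b := by
    calc (a ⊓ b) + (a ⊓ b) ≤ (a ⊓ b) + b := add_mono _ _ _ inf_le_right
      _ = b + (a ⊓ b) := VQ.add_comm _ _
      _ ≤ b + a := add_mono _ _ _ inf_le_left
      _ = a + b := VQ.add_comm _ _
  intro S hS
  exact hεθ S (hS.trans (hle.trans hxθ))
end

section
/- Let (X,τ) be a completely regular topological space (every point and every closed set not containing it are separated by a continuous [0,1]-valued function). Then there exist a value quantale V and a V-space (X,d) that is symmetric (d(x,y) = d(y,x) for all x, y ∈ X) such that the topology generated by (V,X,d) equals τ. -/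
open ENNReal

section Aux

variable {S : Type*}

/-- The value quantale of monotone maps `Finset S → ℝ≥0∞`. -/
abbrev VQ (S : Type*) := Finset S →o ℝ≥0∞

lemma wellAbove_le' {V : Type*} [CompleteLattice V] {a y : V} (h : WellAbove a y) : y ≤ a := by
  obtain ⟨s, hs, hsa⟩ := h {y} (by simp)
  rw [Set.mem_singleton_iff] at hs
  subst hs; exact hsa

open Classical in
/-- The element of `VQ S` taking the value `c` below `F₀` and `⊤` elsewhere. -/
noncomputable def bump (F₀ : Finset S) (c : ℝ≥0∞) : VQ S :=
  ⟨fun G => if G ⊆ F₀ then c else ⊤, by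
    intro G G' hGG'
    by_cases h' : G' ⊆ F₀
    · simp [h', (Finset.Subset.trans hGG' h')]
    · simp [h']⟩

open Classical in
lemma bump_apply (F₀ G : Finset S) (c : ℝ≥0∞) :
    bump F₀ c G = if G ⊆ F₀ then c else ⊤ := rfl

lemma vq_iInf_apply {ι : Sort*} (f : ι → VQ S) (F : Finset S) :
    (⨅ i, f i) F = ⨅ i, f i F := by
  rw [iInf, OrderHom.sInf_apply, iInf_range]

lemma vq_sInf_apply (T : Set (VQ S)) (F : Finset S) :
    (sInf T) F = ⨅ w ∈ T, w F := rfl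

lemma wellAbove_of {a y : VQ S} (F₀ : Finset S) (δ : ℝ≥0∞)
    (hinf : ∀ G, ¬ G ⊆ F₀ → a G = ⊤) (hδ : ∀ G, δ ≤ a G) (hy : y F₀ < δ) :
    WellAbove a y := by
  intro T hT
  have h1 : (sInf T) F₀ ≤ y F₀ := hT F₀
  have h2 : ⨅ w ∈ T, w F₀ < δ := by
    rw [← vq_sInf_apply]; exact lt_of_le_of_lt h1 hy
  have h3 : ∃ w ∈ T, w F₀ < δ := by
    by_contra hc
    push_neg at hc
    exact absurd (le_iInf₂ hc) (not_le_of_gt h2)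
  obtain ⟨s, hs, hsδ⟩ := h3
  refine ⟨s, hs, fun G => ?_⟩
  show s G ≤ a G
  by_cases hG : G ⊆ F₀
  · exact le_trans (le_trans (s.mono hG) hsδ.le) (hδ G)
  · rw [hinf G hG]; exact le_top

lemma wellAbove_bot_iff {a : VQ S} (h : WellAbove a ⊥) :
    ∃ F₀ : Finset S, (∀ G, ¬ G ⊆ F₀ → a G = ⊤) ∧ ∃ δ : ℝ≥0∞, 0 < δ ∧ ∀ G, δ ≤ a G := by
  -- first family: bumps with value 0
  have h1 : sInf (Set.range (fun F₀ : Finset S => bump F₀ (0 : ℝ≥0∞))) ≤ ⊥ := by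
    refine fun G => ?_
    show (sInf (Set.range (fun F₀ : Finset S => bump F₀ (0 : ℝ≥0∞)))) G ≤ (⊥ : VQ S) G
    rw [vq_sInf_apply]
    refine le_trans (iInf₂_le (bump G 0) ⟨G, rfl⟩) ?_
    simp [bump_apply]
  obtain ⟨s₁, hs₁, hs₁a⟩ := h (Set.range (fun F₀ : Finset S => bump F₀ (0 : ℝ≥0∞))) h1
  obtain ⟨F₀, rfl⟩ := hs₁
  -- second family: constants
  have h2 : sInf (Set.range (fun t : Set.Ioi (0:ℝ≥0∞) =>
      (OrderHom.const (Finset S) (t : ℝ≥0∞)))) ≤ ⊥ := by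
    refine fun G => ?_
    show (sInf (Set.range (fun t : Set.Ioi (0:ℝ≥0∞) =>
      (OrderHom.const (Finset S) (t : ℝ≥0∞))))) G ≤ (⊥ : VQ S) G
    rw [vq_sInf_apply]
    have : (⊥ : VQ S) G = 0 := rfl
    rw [this]
    refine ENNReal.le_of_forall_pos_le_add fun ε hε _ => ?_
    rw [zero_add]
    refine le_trans (iInf₂_le (OrderHom.const (Finset S) ((ε : ℝ≥0∞)))
      ⟨⟨(ε : ℝ≥0∞), by simpa using ENNReal.coe_pos.mpr hε⟩, rfl⟩) ?_
    simp [OrderHom.const]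
    exact le_rfl
  obtain ⟨s₂, hs₂, hs₂a⟩ := h _ h2
  obtain ⟨⟨δ, hδ⟩, rfl⟩ := hs₂
  refine ⟨F₀, fun G hG => ?_, δ, hδ, fun G => ?_⟩
  · have h3 : bump F₀ (0:ℝ≥0∞) G ≤ a G := hs₁a G
    rw [bump_apply, if_neg hG] at h3
    exact top_le_iff.mp h3
  · exact hs₂a G

end Aux

section Aux2

variable {S : Type*}

/-- Pointwise addition on `VQ S`. -/
noncomputable def addV : VQ S → VQ S → VQ S := fun a b =>
  ⟨fun F => a F + b F, fun _G _G' h => add_le_add (a.mono h) (b.mono h)⟩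

lemma addV_apply (a b : VQ S) (F : Finset S) : addV a b F = a F + b F := rfl

lemma isVQ_VQ : IsValueQuantale (VQ S) addV where
  raney := by
    intro y
    refine le_antisymm (le_sInf fun a ha => wellAbove_le' ha) (fun F => ?_)
    show (sInf {a : VQ S | WellAbove a y}) F ≤ y F
    rw [vq_sInf_apply]
    by_cases hF : y F = ⊤
    · rw [hF]; exact le_top
    · refine ENNReal.le_of_forall_pos_le_add fun ε hε _ => ?_
      have hne : (ε : ℝ≥0∞) ≠ 0 := by simpa using hε.ne'
      have hmem : WellAbove (bump F (y F + ε)) y := by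
        refine wellAbove_of F (y F + ε) (fun G hG => by rw [bump_apply, if_neg hG])
          (fun G => ?_) (ENNReal.lt_add_right hF hne)
        rw [bump_apply]
        split
        · exact le_refl _
        · exact le_top
      have hle : (⨅ w ∈ {a : VQ S | WellAbove a y}, w F) ≤ bump F (y F + ε) F :=
        iInf₂_le (f := fun (w : VQ S) (_ : w ∈ {a : VQ S | WellAbove a y}) => w F)
          (bump F (y F + ε)) hmem
      refine le_trans hle ?_
      rw [bump_apply, if_pos (Finset.Subset.refl F)]
  wellAbove_bot_nonempty := by
    refine ⟨bump ∅ 1, wellAbove_of ∅ 1 (fun G hG => by rw [bump_apply, if_neg hG])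
      (fun G => ?_) ?_⟩
    · rw [bump_apply]; split
      · exact le_refl _
      · exact le_top
    · show (0 : ℝ≥0∞) < 1
      norm_num
  wellAbove_bot_upward := fun a b ha hab => WellAbove.mono ha hab
  wellAbove_bot_inf := by
    classical
    intro a b ha hb
    obtain ⟨F₀, hFa, δa, hδa, hda⟩ := wellAbove_bot_iff ha
    obtain ⟨F₁, hFb, δb, hδb, hdb⟩ := wellAbove_bot_iff hb
    refine wellAbove_of (F₀ ∪ F₁) (δa ⊓ δb) (fun G hG => ?_) (fun G => ?_) ?_
    · have hG0 : ¬ G ⊆ F₀ := fun hc => hG (hc.trans Finset.subset_union_left)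
      have hG1 : ¬ G ⊆ F₁ := fun hc => hG (hc.trans Finset.subset_union_right)
      show a G ⊓ b G = ⊤
      rw [hFa G hG0, hFb G hG1, top_inf_eq]
    · exact le_inf (inf_le_left.trans (hda G)) (inf_le_right.trans (hdb G))
    · show (0 : ℝ≥0∞) < δa ⊓ δb
      exact lt_inf_iff.mpr ⟨hδa, hδb⟩
  add_assoc := fun a b c => OrderHom.ext _ _ (funext fun F => add_assoc _ _ _)
  add_comm := fun a b => OrderHom.ext _ _ (funext fun F => add_comm _ _)
  add_bot := fun a => OrderHom.ext _ _ (funext fun F => add_zero _)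
  add_sInf := by
    intro a T
    refine OrderHom.ext _ _ (funext fun F => ?_)
    show a F + (sInf T) F = (⨅ s ∈ T, addV a s) F
    rw [vq_sInf_apply, vq_iInf_apply]
    rw [ENNReal.add_iInf]
    refine iInf_congr fun s => ?_
    rw [vq_iInf_apply, ENNReal.add_iInf]
    rfl

end Aux2

/-- every completely regular topological space is generated by a symmetric
continuity space: there are a value quantale `V` and a symmetric `V`-space distance `d`
on `X` whose generated topology is the given one. -/
theorem completelyRegular_generated_by_symmetric {X : Type u} [TopologicalSpace X]
    (hcr : ∀ (C : Set X) (x : X), IsClosed C → x ∉ C →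
      ∃ f : X → ℝ, Continuous f ∧ (∀ y, f y ∈ Set.Icc (0 : ℝ) 1) ∧
        f x = 1 ∧ ∀ y ∈ C, f y = 0) :
    ∃ (V : Type u) (_ : CompleteLattice V) (add : V → V → V) (d : X → X → V),
      IsValueQuantale V add ∧ IsVSpaceOn add d ∧ (∀ x y, d x y = d y x) ∧
      ∀ U : Set X, GenOpen d U ↔ IsOpen U := by
  classical
  set S := {f : X → ℝ // Continuous f ∧ ∀ y, f y ∈ Set.Icc (0 : ℝ) 1} with hS
  refine ⟨VQ S, inferInstance, addV, fun x y =>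
    ⟨fun F => F.sup fun f => ENNReal.ofReal |f.1 x - f.1 y|, fun G G' h => Finset.sup_mono h⟩,
    isVQ_VQ, ⟨?_, ?_⟩, ?_, ?_⟩
  · -- refl
    intro x
    refine OrderHom.ext _ _ (funext fun F => ?_)
    show (F.sup fun f => ENNReal.ofReal |f.1 x - f.1 x|) = (⊥ : VQ S) F
    refine le_antisymm (Finset.sup_le fun f _ => ?_) bot_le
    simp
  · -- triangle
    intro x y z
    refine fun F => ?_
    show (F.sup fun f => ENNReal.ofReal |f.1 x - f.1 z|) ≤ _
    refine Finset.sup_le fun f hf => ?_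
    calc ENNReal.ofReal |f.1 x - f.1 z|
        ≤ ENNReal.ofReal (|f.1 x - f.1 y| + |f.1 y - f.1 z|) :=
          ENNReal.ofReal_le_ofReal (abs_sub_le _ _ _)
      _ = ENNReal.ofReal |f.1 x - f.1 y| + ENNReal.ofReal |f.1 y - f.1 z| :=
          ENNReal.ofReal_add (abs_nonneg _) (abs_nonneg _)
      _ ≤ _ := add_le_add
          (Finset.le_sup (f := fun f : S => ENNReal.ofReal |f.1 x - f.1 y|) hf)
          (Finset.le_sup (f := fun f : S => ENNReal.ofReal |f.1 y - f.1 z|) hf)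
  · -- symmetry
    intro x y
    refine OrderHom.ext _ _ (funext fun F => ?_)
    show (F.sup fun f => ENNReal.ofReal |f.1 x - f.1 y|)
        = (F.sup fun f => ENNReal.ofReal |f.1 y - f.1 x|)
    refine Finset.sup_congr rfl fun f _ => by rw [abs_sub_comm]
  · -- topology
    intro U
    constructor
    · -- GenOpen → IsOpen
      intro hU
      rw [isOpen_iff_forall_mem_open]
      intro x hx
      obtain ⟨ε, hε, hb⟩ := hU x hx
      obtain ⟨F₀, hFinf, δ, hδ, hdδ⟩ := wellAbove_bot_iff hε
      set r : ℝ≥0∞ := δ ⊓ 1 with hr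
      have hrpos : 0 < r := lt_inf_iff.mpr ⟨hδ, zero_lt_one⟩
      have hrtop : r ≠ ⊤ := by
        refine ne_top_of_le_ne_top ?_ inf_le_right
        exact one_ne_top
      have hrR : 0 < r.toReal := ENNReal.toReal_pos hrpos.ne' hrtop
      refine ⟨{y | ∀ f ∈ F₀, |f.1 x - f.1 y| < r.toReal}, ?_, ?_, ?_⟩
      · -- subset of U
        intro y hy
        refine hb ?_
        refine wellAbove_of F₀ δ hFinf hdδ ?_
        show (F₀.sup fun f => ENNReal.ofReal |f.1 x - f.1 y|) < δ
        refine lt_of_lt_of_le ((Finset.sup_lt_iff hδ).mpr fun f hf => ?_) (le_refl δ)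
        refine lt_of_lt_of_le ?_ (inf_le_left (b := (1:ℝ≥0∞)))
        exact (ENNReal.ofReal_lt_iff_lt_toReal (abs_nonneg _) hrtop).mpr (hy f hf)
      · -- open
        have : {y | ∀ f ∈ F₀, |f.1 x - f.1 y| < r.toReal}
            = ⋂ f ∈ F₀, {y | |f.1 x - f.1 y| < r.toReal} := by
          ext y; simp
        rw [this]
        refine isOpen_biInter_finset fun f _ => ?_
        exact isOpen_lt (Continuous.abs (continuous_const.sub f.2.1)) continuous_const
      · -- x ∈ W
        intro f _
        simpa using hrR
    · -- IsOpen → GenOpen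
      intro hU x hx
      obtain ⟨f, hfc, hfm, hfx, hfC⟩ := hcr Uᶜ x hU.isClosed_compl (by simpa using hx)
      set g : S := ⟨f, hfc, hfm⟩ with hg
      refine ⟨bump {g} (1/2 : ℝ≥0∞), wellAbove_of {g} (1/2)
        (fun G hG => by rw [bump_apply, if_neg hG]) (fun G => ?_) ?_, ?_⟩
      · rw [bump_apply]; split
        · exact le_refl _
        · exact le_top
      · show (⊥ : VQ S) {g} < 1/2
        show (0 : ℝ≥0∞) < 1/2
        norm_num
      · intro y hy
        have hle := wellAbove_le' hy  -- d x y ≤ bump {g} (1/2)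
        have h1 : ({g} : Finset S).sup (fun f => ENNReal.ofReal |f.1 x - f.1 y|)
            ≤ bump {g} (1/2 : ℝ≥0∞) {g} := hle {g}
        rw [bump_apply, if_pos (Finset.Subset.refl _), Finset.sup_singleton] at h1
        by_contra hyU
        have hy0 : f y = 0 := hfC y hyU
        rw [hg] at h1
        simp only [hy0, hfx, sub_zero, abs_one, ENNReal.ofReal_one] at h1
        norm_num at h1
end

section
/- Let (V,X,d) be a continuity space with X nonempty. The topology generated by (V,X,d) is connected if and only if for all a, b ∈ X and every function R : X → V_≺ there exists a walk a = x_1, …, x_n = b in X such that for each 1 ≤ j < n, either d(x_j, x_{j+1}) ≺ R(x_j) or d(x_{j+1}, x_j) ≺ R(x_{j+1}). -/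
/-- Along a chain whose step relation preserves membership in `U`,
the last element is in `U` if the head is. -/
lemma walk_last {X : Type*} {P : X → X → Prop} {U : Set X}
    (hP : ∀ p q, P p q → p ∈ U → q ∈ U) :
    ∀ (l : List X), l.Chain' P → ∀ a b : X,
      l.head? = some a → l.getLast? = some b → a ∈ U → b ∈ U := by
  intro l
  induction l with
  | nil => intro _ a b ha; simp at ha
  | cons x xs ih =>
    intro hc a b ha hb haU
    simp only [List.head?_cons, Option.some.injEq] at ha
    subst ha
    cases xs with
    | nil =>
      simp only [List.getLast?_singleton, Option.some.injEq] at hb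
      subst hb; exact haU
    | cons y ys =>
      rw [List.Chain', List.isChain_cons_cons] at hc
      have hy : y ∈ U := hP _ _ hc.1 haU
      exact ih hc.2 y b rfl (by simpa using hb) hy

/-- the topology generated by a continuity space `(V,X,d)` with `X`
nonempty is connected iff for all `a, b ∈ X` and every `R : X → V_≺` there is a walk
`a = x₁, …, xₙ = b` with, at each step, either `d(xⱼ, xⱼ₊₁) ≺ R xⱼ` or
`d(xⱼ₊₁, xⱼ) ≺ R xⱼ₊₁`. -/
theorem connected_iff_walks {V X : Type*} [ValueQuantale V] [Nonempty X]
    (d : X → X → V) (hd : IsVSpaceOn (· + · : V → V → V) d) :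
    @ConnectedSpace X (genTop d) ↔
      ∀ a b : X, ∀ R : X → {v : V // WellAbove v ⊥},
        ∃ l : List X, l.head? = some a ∧ l.getLast? = some b ∧
          l.Chain' fun p q => WellAbove (R p).1 (d p q) ∨ WellAbove (R q).1 (d q p) := by
  letI : TopologicalSpace X := genTop d
  constructor
  · intro hconn a b R
    set U : Set X := {c | ∃ l : List X, l.head? = some a ∧ l.getLast? = some c ∧
      l.Chain' fun p q => WellAbove (R p).1 (d p q) ∨ WellAbove (R q).1 (d q p)} with hUdef
    have haU : a ∈ U := ⟨[a], rfl, rfl, List.isChain_singleton a⟩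
    have hopen : IsOpen U := by
      show GenOpen d U
      intro x hx
      refine ⟨(R x).1, (R x).2, ?_⟩
      intro y hy
      obtain ⟨l, h1, h2, h3⟩ := hx
      refine ⟨l ++ [y], ?_, ?_, ?_⟩
      · cases l with
        | nil => simp at h1
        | cons z zs => simpa using h1
      · simp [List.getLast?_concat]
      · rw [List.Chain', List.isChain_append]
        refine ⟨h3, List.isChain_singleton y, ?_⟩
        intro p hp q hq
        rw [h2] at hp
        simp only [List.head?_cons, Option.mem_def, Option.some.injEq] at hp hq
        subst hp; subst hq
        exact Or.inl hy
    have hclosed : IsClosed U := by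
      rw [← isOpen_compl_iff]
      show GenOpen d Uᶜ
      intro x hx
      refine ⟨(R x).1, (R x).2, ?_⟩
      intro y hy hyU
      apply hx
      obtain ⟨l, h1, h2, h3⟩ := hyU
      refine ⟨l ++ [x], ?_, ?_, ?_⟩
      · cases l with
        | nil => simp at h1
        | cons z zs => simpa using h1
      · simp [List.getLast?_concat]
      · rw [List.Chain', List.isChain_append]
        refine ⟨h3, List.isChain_singleton x, ?_⟩
        intro p hp q hq
        rw [h2] at hp
        simp only [List.head?_cons, Option.mem_def, Option.some.injEq] at hp hq
        subst hp; subst hq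
        exact Or.inr hy
    have hU : U = Set.univ := by
      rcases isClopen_iff.mp ⟨hclosed, hopen⟩ with h | h
      · exact absurd (h ▸ haU) (Set.notMem_empty a)
      · exact h
    have hb : b ∈ U := hU ▸ Set.mem_univ b
    exact hb
  · intro hwalk
    have hpre : IsPreconnected (Set.univ : Set X) := by
      intro U W hUo hWo hcover hUne hWne
      by_contra hempty
      rw [Set.not_nonempty_iff_eq_empty] at hempty
      have hdisj : ∀ x, x ∈ U → x ∈ W → False := fun x hx hw =>
        Set.eq_empty_iff_forall_notMem.mp hempty x ⟨Set.mem_univ x, hx, hw⟩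
      obtain ⟨a, -, haU⟩ := hUne
      obtain ⟨b, -, hbW⟩ := hWne
      have hR : ∀ x : X, ∃ ε : V, WellAbove ε ⊥ ∧
          ((x ∈ U → ball d ε x ⊆ U) ∧ (x ∉ U → ball d ε x ⊆ W)) := by
        intro x
        by_cases hx : x ∈ U
        · obtain ⟨ε, h1, h2⟩ := hUo x hx
          exact ⟨ε, h1, fun _ => h2, fun h => absurd hx h⟩
        · have hxW : x ∈ W := (hcover (Set.mem_univ x)).resolve_left hx
          obtain ⟨ε, h1, h2⟩ := hWo x hxW
          exact ⟨ε, h1, fun h => absurd h hx, fun _ => h2⟩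
      choose ε hε hball using hR
      obtain ⟨l, h1, h2, h3⟩ := hwalk a b fun x => ⟨ε x, hε x⟩
      have hstep : ∀ p q : X,
          (WellAbove (ε p) (d p q) ∨ WellAbove (ε q) (d q p)) → p ∈ U → q ∈ U := by
        intro p q hpq hpU
        rcases hpq with h | h
        · exact (hball p).1 hpU h
        · by_contra hqU
          exact hdisj p hpU ((hball q).2 hqU h)
      exact hdisj b (walk_last hstep l h3 a b h1 h2 haU) hbW
    exact { toNonempty := ‹Nonempty X›, isPreconnected_univ := hpre }
end
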